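/- Fix real numbers θ₀, x, y with 0 ≤ y ≤ x ≤ 1 and 0 ≤ θ₀ ≤ 1, and q with 2/3 ≤ q ≤ 1. For every Borel probability measure μ on the real line with μ([0,1]) = 1, we have q·∫(w1t(θ) − w1a(θ)) dμ(θ) + (1−q)·∫(w2t(θ) − w2a(θ)) dμ(θ) ≥ 0. (This establishes that for two bidders the granularity threshold for a two-item-demand attacker is at most 2/3: for q ≥ 2/3 no false-name attack of the form (1,x),(1,y) is beneficial in expectation for a 2-type bidder, for any per-item value distribution.) -/
import Mathlib


open MeasureTheory

/-- Truthful utility of a 2-type attacker of per-item value θ₀ against a 1-type adversary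
of value θ. -/
noncomputable def w1t (θ₀ θ : ℝ) : ℝ := if θ ≤ 2 * θ₀ then 2 * θ₀ - θ else 0

/-- Attack utility (bids (1,x),(1,y)) against a 1-type adversary of value θ. -/
noncomputable def w1a (θ₀ y θ : ℝ) : ℝ := if θ ≤ y then 2 * θ₀ - 2 * θ else -y

/-- Truthful utility against a 2-type adversary of per-item value θ. -/
noncomputable def w2t (θ₀ θ : ℝ) : ℝ := if θ ≤ θ₀ then 2 * θ₀ - 2 * θ else 0

/-- Attack utility (bids (1,x),(1,y)) against a 2-type adversary of per-item value θ. -/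
noncomputable def w2a (θ₀ x y θ : ℝ) : ℝ :=
  if θ ≤ y / 2 then 2 * θ₀
  else if θ ≤ x / 2 then 2 * θ₀ - 2 * θ + y
  else if θ ≤ (x + y) / 2 then 2 * θ₀ - 4 * θ + y + x
  else 0

lemma meas1 (θ₀ y : ℝ) : Measurable (fun θ => w1t θ₀ θ - w1a θ₀ y θ) := by
  unfold w1t w1a
  apply Measurable.sub <;>
    exact Measurable.ite (measurableSet_le measurable_id measurable_const)
      (by fun_prop) (by fun_prop)

lemma meas2 (θ₀ x y : ℝ) : Measurable (fun θ => w2t θ₀ θ - w2a θ₀ x y θ) := by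
  unfold w2t w2a
  apply Measurable.sub
  · exact Measurable.ite (measurableSet_le measurable_id measurable_const)
      (by fun_prop) (by fun_prop)
  · apply Measurable.ite (measurableSet_le measurable_id measurable_const) (by fun_prop)
    apply Measurable.ite (measurableSet_le measurable_id measurable_const) (by fun_prop)
    exact Measurable.ite (measurableSet_le measurable_id measurable_const)
      (by fun_prop) (by fun_prop)

lemma bd1 (θ₀ x y θ : ℝ) (hy : 0 ≤ y) (hyx : y ≤ x) (hx : x ≤ 1)
    (hθ₀ : 0 ≤ θ₀) (hθ₀1 : θ₀ ≤ 1) (h0 : 0 ≤ θ) (h1 : θ ≤ 1) :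
    |w1t θ₀ θ - w1a θ₀ y θ| ≤ 10 := by
  rw [abs_le]
  unfold w1t w1a
  constructor <;> split_ifs <;> nlinarith

lemma bd2 (θ₀ x y θ : ℝ) (hy : 0 ≤ y) (hyx : y ≤ x) (hx : x ≤ 1)
    (hθ₀ : 0 ≤ θ₀) (hθ₀1 : θ₀ ≤ 1) (h0 : 0 ≤ θ) (h1 : θ ≤ 1) :
    |w2t θ₀ θ - w2a θ₀ x y θ| ≤ 10 := by
  rw [abs_le]
  unfold w2t w2a
  constructor <;> split_ifs <;> nlinarith

lemma pt1 (θ₀ x y θ : ℝ) (hy : 0 ≤ y) (hyx : y ≤ x) (hx : x ≤ 1)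
    (hθ₀ : 0 ≤ θ₀) (hθ₀1 : θ₀ ≤ 1) (h0 : 0 ≤ θ) (h1 : θ ≤ 1) :
    0 ≤ w1t θ₀ θ - w1a θ₀ y θ := by
  unfold w1t w1a
  split_ifs <;> nlinarith

lemma pt2 (θ₀ x y θ : ℝ) (hy : 0 ≤ y) (hyx : y ≤ x) (hx : x ≤ 1)
    (hθ₀ : 0 ≤ θ₀) (hθ₀1 : θ₀ ≤ 1) (h0 : 0 ≤ θ) (h1 : θ ≤ 1) :
    0 ≤ 2 * (w1t θ₀ θ - w1a θ₀ y θ) + (w2t θ₀ θ - w2a θ₀ x y θ) := by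
  unfold w1t w1a w2t w2a
  split_ifs <;> linarith

theorem stmt_2 (θ₀ x y q : ℝ) (hy : 0 ≤ y) (hyx : y ≤ x) (hx : x ≤ 1)
    (hθ₀ : 0 ≤ θ₀) (hθ₀1 : θ₀ ≤ 1) (hq : 2 / 3 ≤ q) (hq1 : q ≤ 1)
    (μ : Measure ℝ) [IsProbabilityMeasure μ] (hμ : μ (Set.Icc 0 1) = 1) :
    q * (∫ θ, (w1t θ₀ θ - w1a θ₀ y θ) ∂μ)
      + (1 - q) * (∫ θ, (w2t θ₀ θ - w2a θ₀ x y θ) ∂μ) ≥ 0 := by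
  have hc : μ (Set.Icc (0:ℝ) 1)ᶜ = 0 := by
    rw [measure_compl measurableSet_Icc (measure_ne_top μ _), hμ, measure_univ]
    simp
  have hae : ∀ᵐ θ ∂μ, θ ∈ Set.Icc (0:ℝ) 1 := by
    rw [ae_iff]
    exact hc
  have hif : Integrable (fun θ => w1t θ₀ θ - w1a θ₀ y θ) μ := by
    apply Integrable.mono' (integrable_const (10:ℝ)) (meas1 θ₀ y).aestronglyMeasurable
    filter_upwards [hae] with θ hθ using bd1 θ₀ x y θ hy hyx hx hθ₀ hθ₀1 hθ.1 hθ.2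
  have hig : Integrable (fun θ => w2t θ₀ θ - w2a θ₀ x y θ) μ := by
    apply Integrable.mono' (integrable_const (10:ℝ)) (meas2 θ₀ x y).aestronglyMeasurable
    filter_upwards [hae] with θ hθ using bd2 θ₀ x y θ hy hyx hx hθ₀ hθ₀1 hθ.1 hθ.2
  have key : q * (∫ θ, (w1t θ₀ θ - w1a θ₀ y θ) ∂μ)
      + (1 - q) * (∫ θ, (w2t θ₀ θ - w2a θ₀ x y θ) ∂μ)
      = ∫ θ, (q * (w1t θ₀ θ - w1a θ₀ y θ) + (1 - q) * (w2t θ₀ θ - w2a θ₀ x y θ)) ∂μ := by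
    rw [integral_add (hif.const_mul q) (hig.const_mul (1 - q)),
      integral_const_mul, integral_const_mul]
  rw [ge_iff_le, key]
  apply integral_nonneg_of_ae
  filter_upwards [hae] with θ hθ
  simp only [Pi.zero_apply]
  have h1 := pt1 θ₀ x y θ hy hyx hx hθ₀ hθ₀1 hθ.1 hθ.2
  have h2 := pt2 θ₀ x y θ hy hyx hx hθ₀ hθ₀1 hθ.1 hθ.2
  nlinarith
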